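/- For every integer k ≥ 1, write ∏_{l=0}^{k−1} σ^l(E_f)(X^{p^l}) = ∑_{l≥0} β_l·X^l with β_l ∈ R', where σ^l(E_f)(X^{p^l}) denotes the series obtained from E_f by applying σ^l to its ℤ_q-coefficients (fixing all variables π_x and X) and then substituting X ↦ X^{p^l}. Then v(β_l) ≥ l/(p^{k−1}·δ) for all l ∈ ℤ_{≥0}. -/

import Mathlib

open PowerSeries

noncomputable section

open scoped Classical

/-- The series ℓ(T) = ∑_{i≥0} T^{p^i}/p^i over ℚ. -/
def lseries (p : ℕ) : PowerSeries ℚ :=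
  PowerSeries.mk fun n => if ∃ i : ℕ, n = p ^ i then (n : ℚ)⁻¹ else 0

/-- Substitution `f(g)` of a power series `g` with zero constant coefficient
into a power series `f`. -/
def psComp {R : Type*} [CommSemiring R] (g f : PowerSeries R) : PowerSeries R :=
  PowerSeries.mk fun n =>
    ∑ k ∈ Finset.range (n + 1), PowerSeries.coeff k f * PowerSeries.coeff n (g ^ k)

/-- The Artin–Hasse exponential E(T) = exp(∑ T^{p^i}/p^i) over ℚ. -/
def artinHasse (p : ℕ) : PowerSeries ℚ := psComp (lseries p) (PowerSeries.exp ℚ)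

/-- The property that `Ep` is the Artin–Hasse exponential regarded as a power
series with coefficients in `ℤ_p`. -/
def IsArtinHasseZp (p : ℕ) [Fact p.Prime] (Ep : PowerSeries ℤ_[p]) : Prop :=
  PowerSeries.map (PadicInt.Coe.ringHom) Ep
    = PowerSeries.map (Rat.castHom ℚ_[p]) (artinHasse p)

/-- The index set 𝔛. -/
def Xfrak (p m dm : ℕ) : Set (ℕ × ℕ) :=
  {x | x.2 * p ^ m ≤ dm * p ^ x.1 ∧ ¬(0 < x.2 ∧ p ∣ x.2)}

/-- The valuation v, with v(π_{(i,j)}) = j/δ = j·p^m/d_m. -/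
def vR {A : Type*} [CommSemiring A] (p m dm : ℕ)
    (r : MvPowerSeries (Xfrak p m dm) A) : WithTop ℚ :=
  if r = 0 then ⊤
  else (((sInf {w : ℕ | ∃ u : (Xfrak p m dm) →₀ ℕ,
      MvPowerSeries.coeff u r ≠ 0 ∧ w = u.sum fun x k => x.1.2 * k} : ℕ) : ℚ)
    * (p : ℚ) ^ m / (dm : ℚ) : ℚ)

/-- ℤ_q = W(𝔽_q), the p-typical Witt vectors of 𝔽_q = GaloisField p a. -/
abbrev Zq (p a : ℕ) [Fact p.Prime] := WittVector p (GaloisField p a)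

/-- The inclusion ℤ_p = W(𝔽_p) → ℤ_q = W(𝔽_q). -/
def padicToZq (p a : ℕ) [Fact p.Prime] : ℤ_[p] →+* Zq p a :=
  (WittVector.map (algebraMap (ZMod p) (GaloisField p a))).comp
    (WittVector.equiv p).symm.toRingHom

/-- ℤ_q carries the discrete topology. -/
instance ZqTopology (p a : ℕ) [Fact p.Prime] : TopologicalSpace (Zq p a) := ⊥

/-- Multivariate power series carry the product (coefficient-wise) topology. -/
instance MvPowerSeries.topologicalSpace {σ R : Type*} [TopologicalSpace R] :
    TopologicalSpace (MvPowerSeries σ R) :=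
  inferInstanceAs (TopologicalSpace ((σ →₀ ℕ) → R))

/-- Substitution `f(g)` of a multivariate power series `g` with zero constant
coefficient into a one-variable power series `f`. -/
def psSubst {σ A : Type*} [CommRing A] (g : MvPowerSeries σ A) (f : PowerSeries A) :
    MvPowerSeries σ A :=
  fun u => ∑ k ∈ Finset.range ((u.sum fun _ c => c) + 1),
    PowerSeries.coeff k f * MvPowerSeries.coeff u (g ^ k)

variable (p a m dm : ℕ) [Fact p.Prime]

/-- `R'[[X]]`, regarded as the ring of formal power series over ℤ_q in the
variables {π_x : x ∈ 𝔛} ∪ {X}: the variable `some x` is π_x, and `none` is X. -/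
abbrev BigB := MvPowerSeries (Option (Xfrak p m dm)) (Zq p a)

/-- The factor E(π_{(i,j)}·[a_{ij}]·X^j) of E_f, an element of `R'[[X]]`. -/
def EfFactor (aa : Xfrak p m dm → GaloisField p a) (Ep : PowerSeries ℤ_[p])
    (x : Xfrak p m dm) : BigB p a m dm :=
  psSubst
    (MvPowerSeries.C (WittVector.teichmuller p (aa x))
      * MvPowerSeries.X (some x) * MvPowerSeries.X none ^ x.1.2)
    (PowerSeries.map (padicToZq p a) Ep)

/-- E_f = ∏_{(i,j)∈𝔛} E(π_{(i,j)}·[a_{ij}]·X^j). -/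
def Ef (aa : Xfrak p m dm → GaloisField p a) (Ep : PowerSeries ℤ_[p]) : BigB p a m dm :=
  ∏' x : Xfrak p m dm, EfFactor p a m dm aa Ep x

/-- The coefficient η_k ∈ R' of X^k in an element of `R'[[X]]`. -/
def xCoeff (g : BigB p a m dm) (k : ℕ) : MvPowerSeries (Xfrak p m dm) (Zq p a) :=
  fun u => MvPowerSeries.coeff (Finsupp.mapDomain some u + Finsupp.single none k) g

/-- Iterates σ^l of the Frobenius σ of ℤ_q = W(𝔽_q) (the unique lift of x ↦ x^p). -/
def frobPow (p a : ℕ) [Fact p.Prime] : ℕ → (Zq p a →+* Zq p a)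
  | 0 => RingHom.id _
  | (l + 1) => (WittVector.frobenius).comp (frobPow p a l)

/-- The substitution X ↦ X^c on `R'[[X]]` (leaving the variables π_x fixed). -/
def substXpow (c : ℕ) (g : BigB p a m dm) : BigB p a m dm :=
  fun u => if c ∣ u none then g (Finsupp.update u none (u none / c)) else 0

/-- The product ∏_{l=0}^{k−1} σ^l(E_f)(X^{p^l}): apply σ^l to the ℤ_q-coefficients of
E_f and substitute X ↦ X^{p^l}, then multiply over l = 0, …, k−1. -/
def twistedProd (aa : Xfrak p m dm → GaloisField p a) (Ep : PowerSeries ℤ_[p]) (k : ℕ) :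
    BigB p a m dm :=
  ∏ l ∈ Finset.range k,
    substXpow p a m dm (p ^ l)
      (MvPowerSeries.map (frobPow p a l) (Ef p a m dm aa Ep))

/-- The weight of a monomial in `R'[[X]]`: π_{(i,j)} counts with weight j, X with 0. -/
def wgtO (v : Option (Xfrak p m dm) →₀ ℕ) : ℕ :=
  v.sum fun o c => (Option.elim o 0 fun x => x.1.2) * c

lemma wgtO_add (v w : Option (Xfrak p m dm) →₀ ℕ) :
    wgtO p m dm (v + w) = wgtO p m dm v + wgtO p m dm w :=
  Finsupp.sum_add_index' (fun _ => mul_zero _) (fun _ _ _ => mul_add _ _ _)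

lemma wgtO_single (o : Option (Xfrak p m dm)) (c : ℕ) :
    wgtO p m dm (Finsupp.single o c) = (Option.elim o 0 fun x => x.1.2) * c :=
  Finsupp.sum_single_index (mul_zero _)

lemma wgtO_update_none (v : Option (Xfrak p m dm) →₀ ℕ) (b : ℕ) :
    wgtO p m dm (Finsupp.update v none b) = wgtO p m dm v := by
  classical
  set f : Option (Xfrak p m dm) → ℕ → ℕ := fun o c => (Option.elim o 0 fun x => x.1.2) * c
  have hs : (Finsupp.update v none b).support ⊆
      insert none (v.support ∪ (Finsupp.update v none b).support) := by
    intro x hx; simp [Finset.mem_insert, hx]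
  have hs' : v.support ⊆ insert none (v.support ∪ (Finsupp.update v none b).support) := by
    intro x hx; simp [Finset.mem_insert, hx]
  rw [wgtO, wgtO, Finsupp.sum_of_support_subset _ hs f (fun i _ => mul_zero _),
    Finsupp.sum_of_support_subset _ hs' f (fun i _ => mul_zero _)]
  refine Finset.sum_congr rfl fun x _ => ?_
  rcases x with _ | x
  · simp [f]
  · simp only [f, Finsupp.coe_update]
    rw [Function.update_of_ne (by simp)]

/-- The key support property: every monomial with nonzero coefficient has
X-degree at most `c` times its weight. -/
def QQ (c : ℕ) (g : BigB p a m dm) : Prop :=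
  ∀ v : Option (Xfrak p m dm) →₀ ℕ,
    MvPowerSeries.coeff v g ≠ 0 → v none ≤ c * wgtO p m dm v

lemma QQ_one (c : ℕ) : QQ p a m dm c 1 := by
  intro v hv
  rw [MvPowerSeries.coeff_one] at hv
  rcases eq_or_ne v 0 with rfl | h
  · simp
  · simp [h] at hv

lemma QQ_mono {c c' : ℕ} (h : c ≤ c') {g : BigB p a m dm} (hg : QQ p a m dm c g) :
    QQ p a m dm c' g := fun v hv => (hg v hv).trans (Nat.mul_le_mul_right _ h)

lemma QQ_mul {c : ℕ} {g h : BigB p a m dm} (hg : QQ p a m dm c g) (hh : QQ p a m dm c h) :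
    QQ p a m dm c (g * h) := by
  intro v hv
  rw [MvPowerSeries.coeff_mul] at hv
  obtain ⟨q, hq, hne⟩ := Finset.exists_ne_zero_of_sum_ne_zero hv
  replace hq : q.1 + q.2 = v := Finset.HasAntidiagonal.mem_antidiagonal.mp hq
  have h1 := hg q.1 (left_ne_zero_of_mul hne)
  have h2 := hh q.2 (right_ne_zero_of_mul hne)
  rw [← hq, Finsupp.add_apply, wgtO_add, Nat.mul_add]
  exact Nat.add_le_add h1 h2

lemma QQ_map {c : ℕ} {g : BigB p a m dm} (hg : QQ p a m dm c g)
    (φ : Zq p a →+* Zq p a) :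
    QQ p a m dm c (MvPowerSeries.map φ g) := by
  intro v hv
  rw [MvPowerSeries.coeff_map] at hv
  exact hg v fun h0 => hv (by rw [h0, map_zero])

lemma QQ_substXpow {c n : ℕ} (hn : 0 < n) {g : BigB p a m dm} (hg : QQ p a m dm c g) :
    QQ p a m dm (n * c) (substXpow p a m dm n g) := by
  intro v hv
  rw [MvPowerSeries.coeff_apply] at hv
  simp only [substXpow] at hv
  split_ifs at hv with hdvd
  · have := hg _ (by rw [MvPowerSeries.coeff_apply]; exact hv)
    rw [wgtO_update_none] at this
    have hnone : (Finsupp.update v none (v none / n)) none = v none / n := by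
      simp [Finsupp.coe_update]
    rw [hnone] at this
    calc v none = n * (v none / n) := (Nat.mul_div_cancel' hdvd).symm
      _ ≤ n * (c * wgtO p m dm v) := Nat.mul_le_mul_left _ this
      _ = n * c * wgtO p m dm v := (mul_assoc _ _ _).symm
  · exact absurd rfl hv

instance : DiscreteTopology (Zq p a) := ⟨rfl⟩

lemma QQ_isClosed (c : ℕ) : IsClosed {g : BigB p a m dm | QQ p a m dm c g} := by
  have heq : {g : BigB p a m dm | QQ p a m dm c g} =
      ⋂ (v : Option (Xfrak p m dm) →₀ ℕ) (_ : ¬ v none ≤ c * wgtO p m dm v),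
        (fun g : BigB p a m dm => g v) ⁻¹' {0} := by
    ext g
    simp only [Set.mem_setOf_eq, Set.mem_iInter, Set.mem_preimage, Set.mem_singleton_iff, QQ,
      MvPowerSeries.coeff_apply]
    constructor
    · intro hg v hv
      by_contra h0
      exact hv (hg v h0)
    · intro hg v hv
      by_contra h0
      exact hv (hg v h0)
  rw [heq]
  refine isClosed_iInter fun v => isClosed_iInter fun _ => ?_
  exact IsClosed.preimage (continuous_apply v) isClosed_singleton

lemma QQ_EfFactor (aa : Xfrak p m dm → GaloisField p a) (Ep : PowerSeries ℤ_[p])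
    (x : Xfrak p m dm) : QQ p a m dm 1 (EfFactor p a m dm aa Ep x) := by
  intro v hv
  rw [MvPowerSeries.coeff_apply] at hv
  simp only [EfFactor, psSubst] at hv
  obtain ⟨n, _, hne⟩ := Finset.exists_ne_zero_of_sum_ne_zero hv
  have hpow : (MvPowerSeries.C
        (WittVector.teichmuller p (aa x))
      * MvPowerSeries.X (some x) * MvPowerSeries.X none ^ x.1.2) ^ n
      = MvPowerSeries.monomial
          (Finsupp.single (some x) n + Finsupp.single none (x.1.2 * n))
          ((WittVector.teichmuller p (aa x)) ^ n) := by
    rw [mul_pow, mul_pow, ← pow_mul, MvPowerSeries.X_pow_eq, MvPowerSeries.X_pow_eq,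
      ← map_pow, ← MvPowerSeries.monomial_zero_eq_C_apply,
      MvPowerSeries.monomial_mul_monomial, MvPowerSeries.monomial_mul_monomial]
    rw [zero_add, mul_one, mul_one]
  rw [hpow, MvPowerSeries.coeff_monomial] at hne
  have hv' : v = Finsupp.single (some x) n + Finsupp.single none (x.1.2 * n) := by
    by_contra h
    rw [if_neg h, mul_zero] at hne
    exact hne rfl
  subst hv'
  have h1 : ((Finsupp.single (some x) n + Finsupp.single none (x.1.2 * n) :
      Option (Xfrak p m dm) →₀ ℕ)) none = x.1.2 * n := by
    simp [Finsupp.single_apply]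
  rw [h1, wgtO_add, wgtO_single, wgtO_single]
  simp

lemma QQ_Ef (aa : Xfrak p m dm → GaloisField p a) (Ep : PowerSeries ℤ_[p]) :
    QQ p a m dm 1 (Ef p a m dm aa Ep) := by
  by_cases hmul : Multipliable (EfFactor p a m dm aa Ep)
  · have := (QQ_isClosed p a m dm 1).mem_of_tendsto hmul.hasProd
      (Filter.Eventually.of_forall fun s => ?_)
    · exact this
    · exact Finset.prod_induction _ _ (fun g h => QQ_mul p a m dm) (QQ_one p a m dm 1)
        (fun y _ => QQ_EfFactor p a m dm aa Ep y)
  · rw [Ef, tprod_eq_one_of_not_multipliable hmul]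
    exact QQ_one p a m dm 1

lemma QQ_twistedProd (aa : Xfrak p m dm → GaloisField p a) (Ep : PowerSeries ℤ_[p])
    (k : ℕ) (hk : 1 ≤ k) :
    QQ p a m dm (p ^ (k - 1)) (twistedProd p a m dm aa Ep k) := by
  have hp : 1 < p := (Fact.out : p.Prime).one_lt
  refine Finset.prod_induction _ _ (fun g h => QQ_mul p a m dm) (QQ_one p a m dm _) ?_
  intro l hl
  rw [Finset.mem_range] at hl
  have h1 : QQ p a m dm (p ^ l * 1) (substXpow p a m dm (p ^ l)
      (MvPowerSeries.map (frobPow p a l)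
        (Ef p a m dm aa Ep))) :=
    QQ_substXpow p a m dm (pow_pos (Nat.lt_of_lt_of_le Nat.zero_lt_one hp.le) l)
      (QQ_map p a m dm (QQ_Ef p a m dm aa Ep) _)
  rw [mul_one] at h1
  exact QQ_mono p a m dm (Nat.pow_le_pow_right (Nat.one_le_of_lt hp) (by omega)) h1

/-- writing `∏_{l=0}^{k−1} σ^l(E_f)(X^{p^l}) = ∑_l β_l X^l` with
`β_l ∈ R'`, one has `v(β_l) ≥ l/(p^{k−1}·δ)` for all `l ≥ 0`
(note `l/(p^{k−1}·δ) = l·p^m/(d_m·p^{k−1})`). -/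
theorem statement14 (ha : 1 ≤ a) (hdm : 1 ≤ dm) (hpdm : ¬ p ∣ dm)
    (aa : Xfrak p m dm → GaloisField p a)
    (Ep : PowerSeries ℤ_[p]) (hEp : IsArtinHasseZp p Ep)
    (k : ℕ) (hk : 1 ≤ k) :
    ∀ l : ℕ,
      (((l : ℚ) * (p : ℚ) ^ m / ((dm : ℚ) * (p : ℚ) ^ (k - 1)) : ℚ) : WithTop ℚ)
        ≤ vR p m dm (xCoeff p a m dm (twistedProd p a m dm aa Ep k) l) := by
  intro l
  set β := xCoeff p a m dm (twistedProd p a m dm aa Ep k) l with hbeta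
  unfold vR
  split_ifs with h0
  · exact le_top
  · have hQ := QQ_twistedProd p a m dm aa Ep k hk
    have hex : ∃ u, MvPowerSeries.coeff u β ≠ 0 := by
      by_contra hc
      push_neg at hc
      exact h0 (MvPowerSeries.ext fun u => by simp [hc u])
    obtain ⟨u0, hu0⟩ := hex
    obtain ⟨u, hu, hwu⟩ := Nat.sInf_mem
      (s := {w : ℕ | ∃ u : (Xfrak p m dm) →₀ ℕ,
        MvPowerSeries.coeff u β ≠ 0 ∧ w = u.sum fun x k => x.1.2 * k})
      ⟨_, u0, hu0, rfl⟩
    have hcoeff : MvPowerSeries.coeff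
        (Finsupp.mapDomain some u + Finsupp.single none l)
        (twistedProd p a m dm aa Ep k) ≠ 0 := by
      rw [MvPowerSeries.coeff_apply] at hu ⊢
      exact hu
    have hkey : l ≤ p ^ (k - 1) * (u.sum fun x c => x.1.2 * c) := by
      have hb := hQ _ hcoeff
      have hnone : ((Finsupp.mapDomain some u + Finsupp.single none l :
          Option (Xfrak p m dm) →₀ ℕ)) none = l := by
        rw [Finsupp.add_apply, Finsupp.mapDomain_notin_range _ _ (by simp),
          Finsupp.single_eq_same, zero_add]
      have hw : wgtO p m dm (Finsupp.mapDomain some u + Finsupp.single none l)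
          = u.sum fun x c => x.1.2 * c := by
        rw [wgtO_add, wgtO_single, wgtO,
          Finsupp.sum_mapDomain_index (fun _ => mul_zero _) (fun _ _ _ => mul_add _ _ _)]
        simp
      rw [hnone, hw] at hb
      exact hb
    have hkey' : l ≤ p ^ (k - 1) *
        sInf {w : ℕ | ∃ u : (Xfrak p m dm) →₀ ℕ,
          MvPowerSeries.coeff u β ≠ 0 ∧ w = u.sum fun x k => x.1.2 * k} := by
      rw [hwu]
      convert hkey using 2
    apply WithTop.coe_le_coe.mpr
    have hdmQ : (0:ℚ) < dm := by exact_mod_cast hdm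
    have hpQ : (0:ℚ) < p := by exact_mod_cast (Fact.out : p.Prime).pos
    rw [div_le_div_iff₀ (mul_pos hdmQ (pow_pos hpQ _)) hdmQ]
    have hc : (l:ℚ) ≤ (p:ℚ) ^ (k-1) *
        ((sInf {w : ℕ | ∃ u : (Xfrak p m dm) →₀ ℕ,
          MvPowerSeries.coeff u β ≠ 0 ∧ w = u.sum fun x k => x.1.2 * k} : ℕ) : ℚ) := by
      exact_mod_cast hkey'
    have hm0 : (0:ℚ) ≤ (p:ℚ) ^ m * dm := by positivity
    nlinarith [mul_le_mul_of_nonneg_right hc hm0]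


end
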